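/- For each t ∈ [0,1), the continuous linear operator C_t on ω is not a compact operator, i.e., there is no neighbourhood U of 0 in ω whose image C_t(U) is relatively compact in ω. -/

import Mathlib

/-- The generalized Cesàro operator `C_t` acting on complex sequences:
`(C_t x)_n = (1/(n+1)) ∑_{i=0}^n t^{n-i} x_i`. -/
noncomputable def genCesaro (t : ℝ) (x : ℕ → ℂ) : ℕ → ℂ :=
  fun n => (1 / ((n : ℂ) + 1)) * ∑ i ∈ Finset.range (n + 1), (t : ℂ) ^ (n - i) * x i

/-- For each `t ∈ [0,1)`, the operator `C_t` on `ω = ℂ^ℕ` (product topology) is not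
compact: there is no neighbourhood `U` of `0` whose image `C_t(U)` is relatively
compact in `ω`. -/
theorem genCesaro_not_compact (t : ℝ) (ht : t ∈ Set.Ico (0 : ℝ) 1) :
    ¬ ∃ U ∈ nhds (0 : ℕ → ℂ), IsCompact (closure (genCesaro t '' U)) := by
  rintro ⟨U, hU, hK⟩
  rw [nhds_pi, Filter.mem_pi] at hU
  obtain ⟨I, hI, V, hV, hVU⟩ := hU
  obtain ⟨N, hN⟩ := hI.infinite_compl.nonempty
  -- the image of the closure under evaluation at N is compact, hence bounded
  have hKN : IsCompact ((fun f : ℕ → ℂ => f N) '' closure (genCesaro t '' U)) :=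
    hK.image (continuous_apply N)
  obtain ⟨C, hC⟩ := hKN.isBounded.exists_norm_le
  set c : ℂ := ((N : ℂ) + 1) * (max C 0 + 1) with hc
  set x : ℕ → ℂ := fun i => if i = N then c else 0 with hx
  have hxU : x ∈ U := by
    apply hVU
    intro i hi
    have : x i = 0 := by
      simp only [hx]
      rw [if_neg]
      rintro rfl
      exact hN hi
    rw [this]
    exact mem_of_mem_nhds (hV i)
  have hval : genCesaro t x N = ((max C 0 : ℝ) : ℂ) + 1 := by
    simp only [genCesaro, hx, mul_ite, mul_zero]
    rw [Finset.sum_ite_eq' _ N]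
    rw [if_pos (Finset.mem_range.mpr (Nat.lt_succ_self N)), Nat.sub_self, pow_zero, one_mul, hc]
    have hne : (N : ℂ) + 1 ≠ 0 := Nat.cast_add_one_ne_zero N
    field_simp
  have hmem : genCesaro t x N ∈ (fun f : ℕ → ℂ => f N) '' closure (genCesaro t '' U) :=
    ⟨genCesaro t x, subset_closure ⟨x, hxU, rfl⟩, rfl⟩
  have hb := hC _ hmem
  rw [hval] at hb
  have h1 : ‖((max C 0 : ℝ) : ℂ) + 1‖ = max C 0 + 1 := by
    rw [show ((max C 0 : ℝ) : ℂ) + 1 = ((max C 0 + 1 : ℝ) : ℂ) by push_cast; ring,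
      Complex.norm_real]
    exact Real.norm_of_nonneg (by positivity)
  rw [h1] at hb
  have : C ≤ max C 0 := le_max_left _ _
  linarith
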